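/- If w₀ ∈ W_G satisfies ⟨w₀·δ_G, δ_K⟩ = max over w ∈ W_G of ⟨w·δ_G, δ_K⟩, then w₀(Φ_G⁺) ⊇ Φ_K⁺. -/

import Mathlib

open scoped RealInnerProductSpace

/-- The reflection in the hyperplane orthogonal to `α`. -/
noncomputable def rootReflection {V : Type*} [NormedAddCommGroup V] [InnerProductSpace ℝ V]
    [FiniteDimensional ℝ V] (α : V) : V ≃ₗᵢ[ℝ] V :=
  Submodule.reflection ((ℝ ∙ α)ᗮ)

/-- The Weyl group: the group generated by the reflections in the roots. -/
noncomputable def weylGroup {V : Type*} [NormedAddCommGroup V] [InnerProductSpace ℝ V]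
    [FiniteDimensional ℝ V] (Φ : Finset V) : Subgroup (V ≃ₗᵢ[ℝ] V) :=
  Subgroup.closure { w | ∃ α ∈ Φ, w = rootReflection α }

section aux
variable {V : Type*} [NormedAddCommGroup V] [InnerProductSpace ℝ V] [FiniteDimensional ℝ V]

lemma rootReflection_apply (α v : V) :
    rootReflection α v = v - (2 * ⟪α, v⟫ / ‖α‖ ^ 2) • α := by
  rw [rootReflection]
  rw [show (Submodule.reflection ((ℝ ∙ α)ᗮ)) v = 2 • (Submodule.starProjection ((ℝ ∙ α)ᗮ) v : V) - v from
    Submodule.reflection_apply _]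
  rw [Submodule.starProjection_orthogonal_val, Submodule.starProjection_singleton, two_smul]
  simp only [RCLike.ofReal_real_eq_id, id_eq]
  rw [div_eq_mul_inv, div_eq_mul_inv]
  module

lemma rootReflection_self (α : V) : rootReflection α α = -α :=
  Submodule.reflection_orthogonalComplement_singleton_eq_neg α

lemma rootReflection_invol (α v : V) : rootReflection α (rootReflection α v) = v :=
  Submodule.reflection_reflection _ v

lemma rootReflection_selfadj (α x y : V) :
    ⟪rootReflection α x, y⟫ = ⟪x, rootReflection α y⟫ := by
  conv_lhs => rw [← rootReflection_invol α y]
  exact (rootReflection α).inner_map_map x (rootReflection α y)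

lemma weyl_mapsTo {Φ : Finset V} (hrefl : ∀ α ∈ Φ, ∀ β ∈ Φ, rootReflection α β ∈ Φ)
    {w : V ≃ₗᵢ[ℝ] V} (hw : w ∈ weylGroup Φ) : ∀ β ∈ Φ, w β ∈ Φ := by
  classical
  induction hw using Subgroup.closure_induction with
  | mem x hx =>
    obtain ⟨α, hα, rfl⟩ := hx
    exact fun β hβ => hrefl α hα β hβ
  | one => simp
  | mul x y hx hy ihx ihy =>
    intro β hβ
    rw [LinearIsometryEquiv.coe_mul, Function.comp_apply]
    exact ihx _ (ihy β hβ)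
  | inv x hx ih =>
    intro β hβ
    have himg : Φ.image x = Φ := by
      apply Finset.eq_of_subset_of_card_le
      · intro b hb
        obtain ⟨a, ha, rfl⟩ := Finset.mem_image.1 hb
        exact ih a ha
      · rw [Finset.card_image_of_injective _ x.injective]
    rw [← himg] at hβ
    obtain ⟨a, ha, rfl⟩ := Finset.mem_image.1 hβ
    rw [LinearIsometryEquiv.coe_inv]
    rwa [x.symm_apply_apply]

lemma key_sum {S P : Finset V} (f : V →ₗ[ℝ] ℝ)
    (hf : ∀ α ∈ S, f α ≠ 0) (hP : ∀ α, α ∈ P ↔ α ∈ S ∧ 0 < f α)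
    (hneg : ∀ α ∈ S, -α ∈ S)
    (hrefl : ∀ α ∈ S, ∀ β ∈ S, rootReflection α β ∈ S)
    {γ : V} (hγ : γ ∈ P) (hγ0 : γ ≠ 0) :
    ‖γ‖ ^ 2 ≤ ∑ α ∈ P, ⟪α, γ⟫ := by
  classical
  have hγS : γ ∈ S := ((hP γ).1 hγ).1
  have hγf : 0 < f γ := ((hP γ).1 hγ).2
  have hγn : (0:ℝ) < ‖γ‖ ^ 2 := pow_pos (norm_pos_iff.mpr hγ0) 2
  set s := rootReflection γ with hs
  have hSP : ∀ α ∈ P, α ∈ S := fun α hα => ((hP α).1 hα).1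
  have hfPos : ∀ α ∈ P, 0 < f α := fun α hα => ((hP α).1 hα).2
  have hsS : ∀ α ∈ P, s α ∈ S := fun α hα => hrefl γ hγS α (hSP α hα)
  have hfs : ∀ α : V, f (s α) = f α - (2 * ⟪γ, α⟫ / ‖γ‖ ^ 2) * f γ := by
    intro α
    rw [hs, rootReflection_apply]
    simp [smul_eq_mul]
  have hkey : ∀ α ∈ P, s α ∉ P → 0 < ⟪α, γ⟫ ∧ -(s α) ∈ P := by
    intro α hα hn
    have h1 : f (s α) < 0 := by
      rcases (hf _ (hsS α hα)).lt_or_gt with h | h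
      · exact h
      · exact absurd ((hP _).2 ⟨hsS α hα, h⟩) hn
    have h2 := hfs α
    have hfa := hfPos α hα
    have hin : 0 < ⟪γ, α⟫ := by
      by_contra h
      push_neg at h
      have : 2 * ⟪γ, α⟫ / ‖γ‖ ^ 2 ≤ 0 :=
        div_nonpos_iff.2 (Or.inr ⟨by linarith, le_of_lt hγn⟩)
      nlinarith
    refine ⟨by rwa [real_inner_comm], (hP _).2 ⟨hneg _ (hsS α hα), ?_⟩⟩
    rw [map_neg]
    linarith
  set σ : V → V := fun α => if s α ∈ P then s α else -(s α) with hσ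
  have hσmem : ∀ α ∈ P, σ α ∈ P := by
    intro α hα
    by_cases h : s α ∈ P
    · simpa [hσ, h] using h
    · simpa [hσ, h] using (hkey α hα h).2
  have hσinv : ∀ α ∈ P, σ (σ α) = α := by
    intro α hα
    by_cases h : s α ∈ P
    · simp only [hσ, if_pos h]
      rw [if_pos (by rwa [hs, rootReflection_invol])]
      rw [hs, rootReflection_invol]
    · simp only [hσ, if_neg h]
      have h2 : s (-(s α)) = -α := by
        rw [hs, map_neg, rootReflection_invol]
      rw [h2]
      have h3 : -α ∉ P := by
        intro hc
        have := hfPos _ hc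
        rw [map_neg] at this
        linarith [hfPos α hα]
      rw [if_neg h3, neg_neg]
  have hsum : ∑ α ∈ P, ⟪α, γ⟫ = ∑ α ∈ P, ⟪σ α, γ⟫ := by
    refine (Finset.sum_nbij' σ σ hσmem hσmem hσinv hσinv ?_).symm
    intro α hα
    rfl
  have hsγ : ⟪s γ, γ⟫ = -⟪γ, γ⟫ := by
    rw [hs, rootReflection_self, inner_neg_left]
  have hterm : ∀ α ∈ P, ⟪σ α, γ⟫ = (if s α ∈ P then -⟪α, γ⟫ else ⟪α, γ⟫) := by
    intro α hα
    have hsel : ⟪s α, γ⟫ = -⟪α, γ⟫ := by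
      rw [hs, rootReflection_selfadj, rootReflection_self, inner_neg_right]
    by_cases h : s α ∈ P
    · simp [hσ, h, hsel]
    · simp [hσ, h, inner_neg_left, hsel]
  -- 2 * sum = sum of (⟪α,γ⟫ + ⟪σα,γ⟫)
  have h2sum : 2 * ∑ α ∈ P, ⟪α, γ⟫
      = ∑ α ∈ P, (if s α ∈ P then (0:ℝ) else 2 * ⟪α, γ⟫) := by
    rw [two_mul]
    nth_rewrite 2 [hsum]
    rw [← Finset.sum_add_distrib]
    apply Finset.sum_congr rfl
    intro α hα
    rw [hterm α hα]
    by_cases h : s α ∈ P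
    · rw [if_pos h, if_pos h]; ring
    · rw [if_neg h, if_neg h]; ring
  have hγterm : (if s γ ∈ P then (0:ℝ) else 2 * ⟪γ, γ⟫) = 2 * ‖γ‖ ^ 2 := by
    have : s γ ∉ P := by
      intro hc
      have := hfPos _ hc
      rw [hs, rootReflection_self, map_neg] at this
      linarith
    rw [if_neg this, real_inner_self_eq_norm_sq]
  have hle : 2 * ‖γ‖ ^ 2 ≤ ∑ α ∈ P, (if s α ∈ P then (0:ℝ) else 2 * ⟪α, γ⟫) := by
    rw [← hγterm]
    refine Finset.single_le_sum (f := fun α => if s α ∈ P then (0:ℝ) else 2 * ⟪α, γ⟫) ?_ hγ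
    intro α hα
    by_cases h : s α ∈ P
    · simp [h]
    · simp only [if_neg h]
      linarith [(hkey α hα h).1]
  linarith [h2sum ▸ hle]

end aux

theorem stmt1 {V : Type*} [NormedAddCommGroup V] [InnerProductSpace ℝ V] [FiniteDimensional ℝ V]
    (Φ : Finset V) (hΦ0 : (0 : V) ∉ Φ)
    (hspan : Submodule.span ℝ (Φ : Set V) = ⊤)
    (hred : ∀ α ∈ Φ, ∀ t : ℝ, t • α ∈ Φ → t = 1 ∨ t = -1)
    (hrefl : ∀ α ∈ Φ, ∀ β ∈ Φ, rootReflection α β ∈ Φ)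
    (ΦGp : Finset V)
    (hΦGp : ∃ f : V →ₗ[ℝ] ℝ, (∀ α ∈ Φ, f α ≠ 0) ∧ ∀ α, α ∈ ΦGp ↔ α ∈ Φ ∧ 0 < f α)
    (δG : V) (hδG : δG = (2⁻¹ : ℝ) • ∑ α ∈ ΦGp, α)
    (ΦK : Finset V) (hΦKsub : ΦK ⊆ Φ)
    (hΦKneg : ∀ α ∈ ΦK, -α ∈ ΦK)
    (hΦKrefl : ∀ α ∈ ΦK, ∀ β ∈ ΦK, rootReflection α β ∈ ΦK)
    (ΦKp : Finset V) (hΦKp : ∀ α, α ∈ ΦKp ↔ α ∈ ΦK ∧ α ∈ ΦGp)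
    (δK : V) (hδK : δK = (2⁻¹ : ℝ) • ∑ α ∈ ΦKp, α)
    (w₀ : V ≃ₗᵢ[ℝ] V) (hw₀ : w₀ ∈ weylGroup Φ)
    (hmax : ∀ w ∈ weylGroup Φ, ⟪w δG, δK⟫ ≤ ⟪w₀ δG, δK⟫) :
    (↑ΦKp : Set V) ⊆ ⇑w₀ '' (↑ΦGp : Set V) := by
  classical
  obtain ⟨f, hf, hfG⟩ := hΦGp
  have hΦneg : ∀ α ∈ Φ, -α ∈ Φ := fun α h => rootReflection_self α ▸ hrefl α h α h
  have hfK : ∀ α, α ∈ ΦKp ↔ α ∈ ΦK ∧ 0 < f α := by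
    intro α
    rw [hΦKp α]
    constructor
    · rintro ⟨h1, h2⟩; exact ⟨h1, ((hfG α).1 h2).2⟩
    · rintro ⟨h1, h2⟩; exact ⟨h1, (hfG α).2 ⟨hΦKsub h1, h2⟩⟩
  intro β hβ
  by_contra hβim
  have hβKp : β ∈ ΦKp := hβ
  have hβG : β ∈ ΦGp := ((hΦKp β).1 hβKp).2
  have hβΦ : β ∈ Φ := ((hfG β).1 hβG).1
  have hβ0 : β ≠ 0 := fun h => hΦ0 (h ▸ hβΦ)
  have hβn : (0:ℝ) < ‖β‖ ^ 2 := pow_pos (norm_pos_iff.mpr hβ0) 2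
  -- w₀⁻¹ β is a negative root
  have hγΦ : w₀.symm β ∈ Φ := by
    have := weyl_mapsTo hrefl (inv_mem hw₀ : w₀⁻¹ ∈ weylGroup Φ) β hβΦ
    rwa [LinearIsometryEquiv.coe_inv] at this
  have hγnP : w₀.symm β ∉ ΦGp := by
    intro hc
    exact hβim ⟨w₀.symm β, hc, w₀.apply_symm_apply β⟩
  have hγf : f (w₀.symm β) < 0 := by
    rcases (hf _ hγΦ).lt_or_gt with h | h
    · exact h
    · exact absurd ((hfG _).2 ⟨hγΦ, h⟩) hγnP
  have hγP : -(w₀.symm β) ∈ ΦGp := by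
    refine (hfG _).2 ⟨hΦneg _ hγΦ, ?_⟩
    rw [map_neg]; linarith
  have hγ0 : -(w₀.symm β) ≠ 0 := by
    intro h
    apply hβ0
    have : w₀.symm β = 0 := by simpa using h
    have := congrArg w₀ this
    simpa using this
  -- δG pairs negatively with w₀.symm β
  have hGsum := key_sum f hf hfG hΦneg hrefl hγP hγ0
  have hnorm : ‖-(w₀.symm β)‖ ^ 2 = ‖β‖ ^ 2 := by
    rw [norm_neg, w₀.symm.norm_map]
  have hδGinner : ⟪δG, w₀.symm β⟫ ≤ -(‖β‖ ^ 2) / 2 := by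
    rw [hδG, real_inner_smul_left, sum_inner]
    have h1 : ∑ α ∈ ΦGp, ⟪α, w₀.symm β⟫ = -∑ α ∈ ΦGp, ⟪α, -(w₀.symm β)⟫ := by
      rw [← Finset.sum_neg_distrib]
      apply Finset.sum_congr rfl
      intro α hα
      rw [inner_neg_right, neg_neg]
    rw [h1]
    rw [hnorm] at hGsum
    linarith
  -- δK pairs positively with β
  have hKsum := key_sum f (fun α h => hf α (hΦKsub h)) hfK hΦKneg hΦKrefl hβKp hβ0
  have hδKinner : ‖β‖ ^ 2 / 2 ≤ ⟪δK, β⟫ := by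
    rw [hδK, real_inner_smul_left, sum_inner]
    linarith
  -- the reflected element does better
  have hsW : rootReflection β ∈ weylGroup Φ :=
    Subgroup.subset_closure ⟨β, hβΦ, rfl⟩
  have hwW : rootReflection β * w₀ ∈ weylGroup Φ := mul_mem hsW hw₀
  have hcalc : ⟪(rootReflection β * w₀) δG, δK⟫
      = ⟪w₀ δG, δK⟫ - (2 * ⟪β, δK⟫ / ‖β‖ ^ 2) * ⟪δG, w₀.symm β⟫ := by
    rw [LinearIsometryEquiv.coe_mul, Function.comp_apply]
    rw [rootReflection_selfadj, rootReflection_apply, inner_sub_right,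
      real_inner_smul_right]
    congr 1
    congr 1
    conv_lhs => rw [show β = w₀ (w₀.symm β) from (w₀.apply_symm_apply β).symm]
    exact w₀.inner_map_map δG (w₀.symm β)
  have hpos : 0 < 2 * ⟪β, δK⟫ / ‖β‖ ^ 2 := by
    apply div_pos _ hβn
    rw [real_inner_comm]
    linarith
  have hgt : ⟪w₀ δG, δK⟫ < ⟪(rootReflection β * w₀) δG, δK⟫ := by
    rw [hcalc]
    nlinarith
  exact absurd (hmax _ hwW) (not_le.2 hgt)
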